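/- Let H be an m×m Hermitian matrix with spectral decomposition H = Σⱼ₌₁ʳ λⱼEⱼ. The vectors E₁eᵤ, …, Eᵣeᵤ that are nonzero form an orthogonal spanning set of the H-invariant subspace of ℂᵐ generated by eᵤ (the column space of the walk matrix Wᵤ(H) = [eᵤ | Heᵤ | … | Hᵐ⁻¹eᵤ]). Moreover, u and v are parallel with respect to H with σᵤ(H) = σᵥ(H) if and only if the H-invariant subspaces generated by eᵤ and eᵥ are equal. -/
import Mathlib


open Matrix Polynomial

section Aux

variable {m r : ℕ} {H : Matrix (Fin m) (Fin m) ℂ}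
    {lam : Fin r → ℝ} {E : Fin r → Matrix (Fin m) (Fin m) ℂ}

lemma aux_Hpow (hEidem : ∀ j, E j * E j = E j)
    (hEorth : ∀ j k, j ≠ k → E j * E k = 0)
    (hEsum : ∑ j, E j = 1)
    (hspec : H = ∑ j, (lam j : ℂ) • E j) :
    ∀ n, H ^ n = ∑ j, ((lam j : ℂ)) ^ n • E j := by
  intro n
  induction n with
  | zero => simpa using hEsum.symm
  | succ n ih =>
    rw [pow_succ, ih, hspec, Finset.sum_mul_sum]
    refine Finset.sum_congr rfl fun j _ => ?_
    rw [Finset.sum_eq_single j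
      (fun k _ hk => by rw [smul_mul_smul_comm, hEorth j k (Ne.symm hk), smul_zero])
      (by simp), smul_mul_smul_comm, hEidem, ← pow_succ]

lemma aux_aeval (hEidem : ∀ j, E j * E j = E j)
    (hEorth : ∀ j k, j ≠ k → E j * E k = 0)
    (hEsum : ∑ j, E j = 1)
    (hspec : H = ∑ j, (lam j : ℂ) • E j) (p : ℂ[X]) :
    aeval H p = ∑ j, (p.eval (lam j : ℂ)) • E j := by
  induction p using Polynomial.induction_on' with
  | add p q hp hq =>
    simp only [map_add, hp, hq, eval_add, add_smul, Finset.sum_add_distrib]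
  | monomial n a =>
    rw [aeval_monomial, ← Algebra.smul_def, aux_Hpow hEidem hEorth hEsum hspec,
      Finset.smul_sum]
    refine Finset.sum_congr rfl fun j _ => ?_
    rw [smul_smul, eval_monomial]

lemma aux_sum_mulVec {ι : Type*} (s : Finset ι) (M : ι → Matrix (Fin m) (Fin m) ℂ)
    (w : Fin m → ℂ) : (∑ i ∈ s, M i) *ᵥ w = ∑ i ∈ s, M i *ᵥ w := by
  induction s using Finset.cons_induction with
  | empty => simp
  | cons a s ha ih => rw [Finset.sum_cons, Finset.sum_cons, add_mulVec, ih]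

lemma aux_span (hlam : Function.Injective lam)
    (hEidem : ∀ j, E j * E j = E j)
    (hEorth : ∀ j k, j ≠ k → E j * E k = 0)
    (hEsum : ∑ j, E j = 1)
    (hspec : H = ∑ j, (lam j : ℂ) • E j) (w : Fin m → ℂ) :
    Submodule.span ℂ (Set.range fun j => E j *ᵥ w) =
      Submodule.span ℂ (Set.range fun n : ℕ => (H ^ n) *ᵥ w) := by
  set V : Fin r → ℂ := fun k => ((lam k : ℂ)) with hV
  have hinj : Set.InjOn V (Finset.univ : Finset (Fin r)) := fun a _ b _ hab =>
    hlam (Complex.ofReal_injective hab)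
  apply le_antisymm
  · rw [Submodule.span_le]
    rintro _ ⟨j, rfl⟩
    show E j *ᵥ w ∈ _
    have hEj : E j = aeval H (Lagrange.basis Finset.univ V j) := by
      rw [aux_aeval hEidem hEorth hEsum hspec]
      have h1 : ∀ k ∈ Finset.univ, k ≠ j →
          (Lagrange.basis Finset.univ V j).eval (V k) • E k = 0 := fun k _ hk => by
        rw [Lagrange.eval_basis_of_ne (Ne.symm hk) (Finset.mem_univ k), zero_smul]
      rw [Finset.sum_eq_single j h1 (by simp),
        Lagrange.eval_basis_self hinj (Finset.mem_univ j), one_smul]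
    rw [hEj, aeval_eq_sum_range, aux_sum_mulVec]
    apply Submodule.sum_mem
    intro n _
    rw [smul_mulVec]
    exact Submodule.smul_mem _ _ (Submodule.subset_span ⟨n, rfl⟩)
  · rw [Submodule.span_le]
    rintro _ ⟨n, rfl⟩
    show (H ^ n) *ᵥ w ∈ _
    rw [aux_Hpow hEidem hEorth hEsum hspec n, aux_sum_mulVec]
    apply Submodule.sum_mem
    intro j _
    rw [smul_mulVec]
    exact Submodule.smul_mem _ _ (Submodule.subset_span ⟨j, rfl⟩)

lemma aux_map (hEidem : ∀ j, E j * E j = E j)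
    (hEorth : ∀ j k, j ≠ k → E j * E k = 0)
    (j : Fin r) (w : Fin m → ℂ) :
    Submodule.map (Matrix.mulVecLin (E j))
        (Submodule.span ℂ (Set.range fun k => E k *ᵥ w)) =
      Submodule.span ℂ {E j *ᵥ w} := by
  rw [Submodule.map_span, ← Set.range_comp]
  apply le_antisymm
  · rw [Submodule.span_le]
    rintro _ ⟨k, rfl⟩
    simp only [Function.comp_apply, mulVecLin_apply, mulVec_mulVec]
    by_cases h : j = k
    · subst h
      rw [hEidem]
      exact Submodule.subset_span rfl
    · rw [hEorth j k h, zero_mulVec]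
      exact Submodule.zero_mem _
  · rw [Submodule.span_le, Set.singleton_subset_iff]
    refine Submodule.subset_span ⟨j, ?_⟩
    simp [mulVec_mulVec, hEidem j]

end Aux

theorem stmt6 {m r : ℕ} (H : Matrix (Fin m) (Fin m) ℂ)
    (lam : Fin r → ℝ) (E : Fin r → Matrix (Fin m) (Fin m) ℂ)
    (hH : H.IsHermitian)
    (hlam : Function.Injective lam)
    (hEherm : ∀ j, (E j).IsHermitian)
    (hEidem : ∀ j, E j * E j = E j)
    (hEorth : ∀ j k, j ≠ k → E j * E k = 0)
    (hEsum : ∑ j, E j = 1)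
    (hEnz : ∀ j, E j ≠ 0)
    (hspec : H = ∑ j, (lam j : ℂ) • E j)
    (u v : Fin m) :
    (∀ j k, j ≠ k →
        dotProduct (star ((E j) *ᵥ (Pi.single u 1 : Fin m → ℂ)))
          ((E k) *ᵥ (Pi.single u 1 : Fin m → ℂ)) = 0) ∧
    Submodule.span ℂ (Set.range fun j => (E j) *ᵥ (Pi.single u 1 : Fin m → ℂ)) =
      Submodule.span ℂ (Set.range fun n : ℕ => (H ^ n) *ᵥ (Pi.single u 1 : Fin m → ℂ)) ∧
    (((∀ j, ∃ c : ℂ,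
        (E j) *ᵥ (Pi.single u 1 : Fin m → ℂ) = c • ((E j) *ᵥ (Pi.single v 1 : Fin m → ℂ))) ∧
      (∀ j, (E j) *ᵥ (Pi.single u 1 : Fin m → ℂ) = 0 ↔
        (E j) *ᵥ (Pi.single v 1 : Fin m → ℂ) = 0))
      ↔ Submodule.span ℂ (Set.range fun n : ℕ => (H ^ n) *ᵥ (Pi.single u 1 : Fin m → ℂ)) =
          Submodule.span ℂ (Set.range fun n : ℕ => (H ^ n) *ᵥ (Pi.single v 1 : Fin m → ℂ))) := by
  set eu : Fin m → ℂ := Pi.single u 1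
  set ev : Fin m → ℂ := Pi.single v 1
  refine ⟨?_, ?_, ?_⟩
  · intro j k hjk
    rw [Matrix.star_mulVec, (hEherm j).eq, Matrix.dotProduct_mulVec, vecMul_vecMul,
      ← Matrix.dotProduct_mulVec, hEorth j k hjk, zero_mulVec, dotProduct_zero]
  · exact aux_span hlam hEidem hEorth hEsum hspec eu
  · constructor
    · rintro ⟨hpar, hsupp⟩
      rw [← aux_span hlam hEidem hEorth hEsum hspec eu,
        ← aux_span hlam hEidem hEorth hEsum hspec ev]
      apply le_antisymm
      · rw [Submodule.span_le]
        rintro _ ⟨j, rfl⟩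
        show E j *ᵥ eu ∈ _
        obtain ⟨c, hc⟩ := hpar j
        rw [hc]
        exact Submodule.smul_mem _ _ (Submodule.subset_span ⟨j, rfl⟩)
      · rw [Submodule.span_le]
        rintro _ ⟨j, rfl⟩
        show E j *ᵥ ev ∈ _
        by_cases h : E j *ᵥ ev = 0
        · simp only [h]
          exact Submodule.zero_mem _
        · obtain ⟨c, hc⟩ := hpar j
          have hu : E j *ᵥ eu ≠ 0 := fun h0 => h ((hsupp j).mp h0)
          have hcne : c ≠ 0 := fun h0 => hu (by rw [hc, h0, zero_smul])
          have : E j *ᵥ ev = c⁻¹ • (E j *ᵥ eu) := by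
            rw [hc, smul_smul, inv_mul_cancel₀ hcne, one_smul]
          rw [this]
          exact Submodule.smul_mem _ _ (Submodule.subset_span ⟨j, rfl⟩)
    · intro hspan
      rw [← aux_span hlam hEidem hEorth hEsum hspec eu,
        ← aux_span hlam hEidem hEorth hEsum hspec ev] at hspan
      have key : ∀ j, Submodule.span ℂ {E j *ᵥ eu} = Submodule.span ℂ {E j *ᵥ ev} := by
        intro j
        rw [← aux_map hEidem hEorth j eu, ← aux_map hEidem hEorth j ev, hspan]
      constructor
      · intro j
        have : E j *ᵥ eu ∈ Submodule.span ℂ {E j *ᵥ ev} := by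
          rw [← key j]
          exact Submodule.subset_span rfl
        obtain ⟨c, hc⟩ := Submodule.mem_span_singleton.mp this
        exact ⟨c, hc.symm⟩
      · intro j
        constructor
        · intro h0
          have : E j *ᵥ ev ∈ Submodule.span ℂ {E j *ᵥ eu} := by
            rw [key j]; exact Submodule.subset_span rfl
          rw [h0, Submodule.span_zero_singleton, Submodule.mem_bot] at this
          exact this
        · intro h0
          have : E j *ᵥ eu ∈ Submodule.span ℂ {E j *ᵥ ev} := by
            rw [← key j]; exact Submodule.subset_span rfl
          rw [h0, Submodule.span_zero_singleton, Submodule.mem_bot] at this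
          exact this
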